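/- arXiv:2104.03254 — 3 statements merged into one kernel-verified Lean document; each statement's English description precedes it below -/
import Mathlib

section
/- Let f₁(x) = β₁x, F₁(x) = (λ(1−x) − ωx)/(β₁x), ψᵢ(x) = βᵢx − γᵢ − λ, xᵢ = (γᵢ+λ)/βᵢ for i = 1,2, and suppose x₁ < min(x₂, λ/(λ+ω)). Then along solutions of the two-strain density system in the open positive octant, the Lyapunov function W(x,y,z) = x₂(∫_{x₁}^{x} ψ₁(s)/f₁(s) ds + ∫_{F₁(x₁)}^{y} (s − F₁(x₁))/s ds) + x₁·z has derivative Ẇ = x₂ψ₁(x)(F₁(x) − F₁(x₁)) + z β₁β₂ x² (x₁ − x₂)/f₁(x) ≤ 0. -/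
open intervalIntegral

lemma aux_hasDerivAt_integral (p c : ℝ) (hp : 0 < p) {a : ℝ} (ha : 0 < a) :
    HasDerivAt (fun b => ∫ s in p..b, (1 - c / s)) (1 - c / a) a := by
  have h2 : HasDerivAt (fun b : ℝ => (b - p) - c * (Real.log b - Real.log p))
      (1 - c / a) a := by
    have hl : HasDerivAt (fun b : ℝ => c * (Real.log b - Real.log p)) (c * (1/a)) a := by
      simpa using ((Real.hasDerivAt_log (ne_of_gt ha)).sub_const (Real.log p)).const_mul c
    have h0 : HasDerivAt (fun b : ℝ => b - p) 1 a := (hasDerivAt_id a).sub_const p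
    exact (h0.sub hl).congr_deriv (by ring)
  apply h2.congr_of_eventuallyEq
  filter_upwards [Ioi_mem_nhds ha] with b hb
  have hb : (0:ℝ) < b := hb
  have hnmem : (0:ℝ) ∉ Set.uIcc p b := Set.notMem_uIcc_of_lt hp hb
  have hint : IntervalIntegrable (fun s => c / s) MeasureTheory.volume p b := by
    apply ContinuousOn.intervalIntegrable
    exact continuousOn_const.div continuousOn_id (fun s hs => fun h => hnmem (h ▸ hs))
  have hone : IntervalIntegrable (fun _ : ℝ => (1:ℝ)) MeasureTheory.volume p b :=
    intervalIntegrable_const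
  rw [integral_sub hone hint]
  have hlog : (∫ s in p..b, c / s) = c * (Real.log b - Real.log p) := by
    simp_rw [div_eq_mul_inv]
    rw [integral_const_mul, integral_inv hnmem, Real.log_div (ne_of_gt hb) (ne_of_gt hp)]
  rw [hlog]
  simp

/-- Along solutions of the two-strain density system in the open positive
octant, the Lyapunov function `W` has derivative
`Ẇ = x₂ ψ₁(x)(F₁(x) - F₁(x₁)) + z β₁ β₂ x² (x₁ - x₂)/f₁(x) ≤ 0`,
where `f₁(x) = β₁ x`, `F₁(x) = (λ(1-x) - ωx)/(β₁ x)`, `ψᵢ(x) = βᵢ x - γᵢ - λ`,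
and `xᵢ = (γᵢ + λ)/βᵢ`. -/
theorem lyapunov_derivative_two_strain
    (lam beta1 beta2 gam1 gam2 om : ℝ)
    (hlam : 0 < lam) (hb1 : 0 < beta1) (hb2 : 0 < beta2)
    (hg1 : 0 < gam1) (hg2 : 0 < gam2) (hom : 0 ≤ om)
    (f1 F1 psi1 psi2 : ℝ → ℝ) (x1 x2 : ℝ)
    (hf1 : ∀ s, f1 s = beta1 * s)
    (hF1 : ∀ s, F1 s = (lam * (1 - s) - om * s) / (beta1 * s))
    (hpsi1 : ∀ s, psi1 s = beta1 * s - gam1 - lam)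
    (hpsi2 : ∀ s, psi2 s = beta2 * s - gam2 - lam)
    (hx1 : x1 = (gam1 + lam) / beta1) (hx2 : x2 = (gam2 + lam) / beta2)
    (hord : x1 < min x2 (lam / (lam + om)))
    (W : ℝ → ℝ → ℝ → ℝ)
    (hW : ∀ a b c : ℝ, W a b c =
      x2 * ((∫ s in x1..a, psi1 s / f1 s)
            + (∫ s in F1 x1..b, (s - F1 x1) / s)) + x1 * c)
    (x y z : ℝ → ℝ)
    (hxpos : ∀ t, 0 < x t) (hypos : ∀ t, 0 < y t) (hznn : ∀ t, 0 ≤ z t)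
    (hx : ∀ t, HasDerivAt x
      (lam - lam * x t - beta1 * x t * y t - beta2 * x t * z t - om * x t) t)
    (hy : ∀ t, HasDerivAt y (y t * psi1 (x t)) t)
    (hz : ∀ t, HasDerivAt z (z t * psi2 (x t)) t) :
    ∀ t, HasDerivAt (fun s => W (x s) (y s) (z s))
        (x2 * psi1 (x t) * (F1 (x t) - F1 x1)
          + z t * beta1 * beta2 * (x t) ^ 2 * (x1 - x2) / f1 (x t)) t ∧
      x2 * psi1 (x t) * (F1 (x t) - F1 x1)
          + z t * beta1 * beta2 * (x t) ^ 2 * (x1 - x2) / f1 (x t) ≤ 0 := by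
  have hx1pos : 0 < x1 := by
    rw [hx1]; positivity
  have hx2pos : 0 < x2 := by
    rw [hx2]; positivity
  have hord1 : x1 < x2 := lt_of_lt_of_le hord (min_le_left _ _)
  have hord2 : x1 < lam / (lam + om) := lt_of_lt_of_le hord (min_le_right _ _)
  have hlo : 0 < lam + om := by linarith
  have hnum : 0 < lam - (lam + om) * x1 := by
    nlinarith [(lt_div_iff₀ hlo).mp hord2]
  have hCpos : 0 < F1 x1 := by
    rw [hF1]
    apply div_pos
    · nlinarith
    · positivity
  intro t
  set X := x t with hXdef
  set Y := y t with hYdef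
  have hXpos : 0 < X := hxpos t
  have hYpos : 0 < Y := hypos t
  -- derivative of the first integral
  have hGcong : ∀ a : ℝ, 0 < a →
      (∫ s in x1..a, psi1 s / f1 s) = ∫ s in x1..a, (1 - x1 / s) := by
    intro a ha
    apply intervalIntegral.integral_congr
    intro s hs
    have hs0 : 0 < s := by
      rcases Set.mem_uIcc.mp hs with ⟨h1, _⟩ | ⟨h1, _⟩
      · exact lt_of_lt_of_le hx1pos h1
      · exact lt_of_lt_of_le ha h1
    show psi1 s / f1 s = 1 - x1 / s
    rw [hpsi1, hf1, hx1]
    field_simp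
    ring
  have hG : HasDerivAt (fun a => ∫ s in x1..a, psi1 s / f1 s) (1 - x1 / X) X := by
    apply (aux_hasDerivAt_integral x1 x1 hx1pos hXpos).congr_of_eventuallyEq
    filter_upwards [Ioi_mem_nhds hXpos] with a ha
    exact hGcong a ha
  -- derivative of the second integral
  have hHcong : ∀ b : ℝ, 0 < b →
      (∫ s in F1 x1..b, (s - F1 x1) / s) = ∫ s in F1 x1..b, (1 - F1 x1 / s) := by
    intro b hb
    apply intervalIntegral.integral_congr
    intro s hs
    have hs0 : 0 < s := by
      rcases Set.mem_uIcc.mp hs with ⟨h1, _⟩ | ⟨h1, _⟩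
      · exact lt_of_lt_of_le hCpos h1
      · exact lt_of_lt_of_le hb h1
    show (s - F1 x1) / s = 1 - F1 x1 / s
    field_simp
  have hH : HasDerivAt (fun b => ∫ s in F1 x1..b, (s - F1 x1) / s)
      (1 - F1 x1 / Y) Y := by
    apply (aux_hasDerivAt_integral (F1 x1) (F1 x1) hCpos hYpos).congr_of_eventuallyEq
    filter_upwards [Ioi_mem_nhds hYpos] with b hb
    exact hHcong b hb
  -- assemble
  have hd : HasDerivAt (fun s => W (x s) (y s) (z s))
      (x2 * ((1 - x1 / X) *
          (lam - lam * X - beta1 * X * Y - beta2 * X * z t - om * X)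
        + (1 - F1 x1 / Y) * (Y * psi1 X)) + x1 * (z t * psi2 X)) t := by
    have h1 := ((hG.comp t (hx t)).add (hH.comp t (hy t))).const_mul x2
    have h2 := h1.add ((hz t).const_mul x1)
    have : (fun s => W (x s) (y s) (z s)) = fun s =>
        x2 * ((∫ u in x1..x s, psi1 u / f1 u)
          + (∫ u in F1 x1..y s, (u - F1 x1) / u)) + x1 * z s := by
      funext s; rw [hW]
    rw [this]
    exact h2
  -- helper identities
  have hp1 : psi1 X = beta1 * (X - x1) := by
    rw [hpsi1, hx1]; field_simp; ring
  have hp2 : psi2 X = beta2 * (X - x2) := by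
    rw [hpsi2, hx2]; field_simp; ring
  have hFdiff : F1 X - F1 x1 = lam * (x1 - X) / (beta1 * X * x1) := by
    rw [hF1, hF1]; field_simp; ring
  -- the derivative value equality
  have heq : x2 * ((1 - x1 / X) *
          (lam - lam * X - beta1 * X * Y - beta2 * X * z t - om * X)
        + (1 - F1 x1 / Y) * (Y * psi1 X)) + x1 * (z t * psi2 X)
      = x2 * psi1 X * (F1 X - F1 x1)
          + z t * beta1 * beta2 * X ^ 2 * (x1 - x2) / f1 X := by
    rw [hp1, hp2, hFdiff, hf1, hF1]
    field_simp
    ring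
  constructor
  · exact heq ▸ hd
  · rw [hp1, hFdiff, hf1]
    have key : x2 * (beta1 * (X - x1)) * (lam * (x1 - X) / (beta1 * X * x1))
        + z t * beta1 * beta2 * X ^ 2 * (x1 - x2) / (beta1 * X)
        = -(x2 * lam * (X - x1) ^ 2 / (X * x1) + z t * beta2 * X * (x2 - x1)) := by
      field_simp
      ring
    rw [key]
    have h1 : 0 ≤ x2 * lam * (X - x1) ^ 2 / (X * x1) :=
      div_nonneg (mul_nonneg (mul_nonneg hx2pos.le hlam.le) (sq_nonneg _))
        (mul_pos hXpos hx1pos).le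
    have h2 : 0 ≤ z t * beta2 * X * (x2 - x1) := by
      apply mul_nonneg (mul_nonneg (mul_nonneg (hznn t) hb2.le) hXpos.le)
      linarith
    linarith
end

section
/- If (γ₁+λ)/β₁ ≥ λ/(λ+ω) and (γ₂+λ)/β₂ ≥ λ/(λ+ω), then the disease-free equilibrium (λ/(λ+ω), 0, 0) is the only equilibrium of the two-strain density system in the simplex {x ≥ 0, y ≥ 0, z ≥ 0, x+y+z ≤ 1}. -/
/-- If `(γ₁+λ)/β₁ ≥ λ/(λ+ω)` and `(γ₂+λ)/β₂ ≥ λ/(λ+ω)`, then the disease-free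
equilibrium `(λ/(λ+ω), 0, 0)` is the only equilibrium of the two-strain density
system in the simplex. -/
theorem disease_free_unique_equilibrium
    (lam beta1 beta2 gam1 gam2 om : ℝ)
    (hlam : 0 < lam) (hb1 : 0 < beta1) (hb2 : 0 < beta2)
    (hg1 : 0 < gam1) (hg2 : 0 < gam2) (hom : 0 ≤ om)
    (h1 : (gam1 + lam) / beta1 ≥ lam / (lam + om))
    (h2 : (gam2 + lam) / beta2 ≥ lam / (lam + om)) :
    ∀ x y z : ℝ, 0 ≤ x → 0 ≤ y → 0 ≤ z → x + y + z ≤ 1 →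
      lam - lam * x - beta1 * x * y - beta2 * x * z - om * x = 0 →
      y * (beta1 * x - gam1 - lam) = 0 →
      z * (beta2 * x - gam2 - lam) = 0 →
      x = lam / (lam + om) ∧ y = 0 ∧ z = 0 := by
  intro x y z hx hy hz hsum e1 e2 e3
  have hlo : 0 < lam + om := by linarith
  have hy0 : y = 0 := by
    by_contra hyne
    have hypos : 0 < y := lt_of_le_of_ne hy (Ne.symm hyne)
    have hbx : beta1 * x = gam1 + lam := by
      rcases mul_eq_zero.mp e2 with h | h
      · exact absurd h hyne
      · linarith
    have hxpos : 0 < x := by nlinarith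
    have hxge : lam ≤ (lam + om) * x := by
      have h1' : lam / (lam + om) ≤ (gam1 + lam) / beta1 := h1
      rw [div_le_div_iff₀ hlo hb1] at h1'
      nlinarith
    nlinarith [mul_pos (mul_pos hb1 hxpos) hypos, mul_nonneg (mul_nonneg hb2.le hx) hz]
  have hz0 : z = 0 := by
    by_contra hzne
    have hzpos : 0 < z := lt_of_le_of_ne hz (Ne.symm hzne)
    have hbx : beta2 * x = gam2 + lam := by
      rcases mul_eq_zero.mp e3 with h | h
      · exact absurd h hzne
      · linarith
    have hxpos : 0 < x := by nlinarith
    have hxge : lam ≤ (lam + om) * x := by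
      have h2' : lam / (lam + om) ≤ (gam2 + lam) / beta2 := h2
      rw [div_le_div_iff₀ hlo hb2] at h2'
      nlinarith
    nlinarith [mul_pos (mul_pos hb2 hxpos) hzpos, mul_nonneg (mul_nonneg hb1.le hx) hy]
  refine ⟨?_, hy0, hz0⟩
  subst hy0; subst hz0
  field_simp
  nlinarith [e1]
end

section
/- For the single-strain density system with x* = (γ+λ)/β < λ/(λ+ω), the function V(x,y) = ∫_{x*}^{x} (βs − γ − λ)/(βs) ds + ∫_{F(x*)}^{y} (s − F(x*))/s ds is nonnegative on the open positive quadrant, vanishes exactly at (x*, F(x*)), and its derivative along solutions is V̇ = ψ(x)(F(x) − F(x*)) ≤ 0, where ψ(x) = βx − γ − λ. -/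
open intervalIntegral

private lemma int_eval (c u : ℝ) (hc : 0 < c) (hu : 0 < u) :
    ∫ s in c..u, (s - c)/s = u - c - c*(Real.log u - Real.log c) := by
  have h0 : (0:ℝ) ∉ Set.uIcc c u := Set.notMem_uIcc_of_lt hc hu
  have key : ∀ s ∈ Set.uIcc c u,
      HasDerivAt (fun r => r - c * Real.log r) ((s - c)/s) s := by
    intro s hs
    have hs0 : s ≠ 0 := fun h => h0 (h ▸ hs)
    have h : HasDerivAt (fun r => r - c * Real.log r) (1 - c * s⁻¹) s :=
      (hasDerivAt_id s).sub ((Real.hasDerivAt_log hs0).const_mul c)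
    convert h using 1
    field_simp
  have hcont : IntervalIntegrable (fun s => (s - c)/s) MeasureTheory.volume c u := by
    apply ContinuousOn.intervalIntegrable
    exact ((continuousOn_id.sub continuousOn_const).div continuousOn_id
      (fun s hs => fun h => h0 (h ▸ hs)))
  rw [intervalIntegral.integral_eq_sub_of_hasDerivAt key hcont]
  ring

private lemma glem (c u : ℝ) (hc : 0 < c) (hu : 0 < u) :
    0 ≤ u - c - c*(Real.log u - Real.log c) ∧
    (u - c - c*(Real.log u - Real.log c) = 0 ↔ u = c) := by
  have hr : 0 < u / c := div_pos hu hc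
  have hlog : Real.log u - Real.log c = Real.log (u/c) :=
    (Real.log_div hu.ne' hc.ne').symm
  rw [hlog]
  rcases eq_or_ne u c with h | h
  · subst h; simp [div_self hu.ne']
  · have hne : u / c ≠ 1 := by
      intro h1
      apply h
      field_simp at h1
      linarith
    have hlt := Real.log_lt_sub_one_of_pos hr hne
    have h2 : c * Real.log (u/c) < c * (u/c - 1) := mul_lt_mul_of_pos_left hlt hc
    have h3 : c * (u/c - 1) = u - c := by field_simp
    constructor
    · linarith
    · constructor
      · intro h0; linarith
      · intro h0; exact absurd h0 h

/-- For the single-strain density system with endemic equilibrium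
`x* = (γ+λ)/β < λ/(λ+ω)`, the Lyapunov function
`V(x,y) = ∫_{x*}^{x} ψ(s)/(βs) ds + ∫_{F(x*)}^{y} (s - F(x*))/s ds`
is nonnegative on the open positive quadrant, vanishes exactly at
`(x*, F(x*))`, and its derivative along solutions equals
`ψ(x)(F(x) - F(x*)) ≤ 0`, where `ψ(x) = βx - γ - λ` and
`F(x) = (λ(1-x) - ωx)/(βx)`. -/
theorem lyapunov_single_strain
    (lam beta gam om : ℝ)
    (hlam : 0 < lam) (hbeta : 0 < beta) (hgam : 0 < gam) (hom : 0 ≤ om)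
    (F psi : ℝ → ℝ) (xs : ℝ)
    (hF : ∀ s, F s = (lam * (1 - s) - om * s) / (beta * s))
    (hpsi : ∀ s, psi s = beta * s - gam - lam)
    (hxs : xs = (gam + lam) / beta)
    (hlt : xs < lam / (lam + om))
    (V : ℝ → ℝ → ℝ)
    (hV : ∀ a b : ℝ, V a b =
      (∫ s in xs..a, psi s / (beta * s)) + (∫ s in F xs..b, (s - F xs) / s)) :
    (∀ a b : ℝ, 0 < a → 0 < b → 0 ≤ V a b) ∧
    (∀ a b : ℝ, 0 < a → 0 < b → (V a b = 0 ↔ a = xs ∧ b = F xs)) ∧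
    (∀ x y : ℝ → ℝ,
      (∀ t, 0 < x t) → (∀ t, 0 < y t) →
      (∀ t, HasDerivAt x (beta * x t * (F (x t) - y t)) t) →
      (∀ t, HasDerivAt y (y t * psi (x t)) t) →
      ∀ t, HasDerivAt (fun s => V (x s) (y s))
            (psi (x t) * (F (x t) - F xs)) t ∧
          psi (x t) * (F (x t) - F xs) ≤ 0) := by
  have hbne : beta ≠ 0 := hbeta.ne'
  have hxs0 : 0 < xs := by rw [hxs]; positivity
  have hxsne : xs ≠ 0 := hxs0.ne'
  have hbxs : beta * xs = gam + lam := by rw [hxs]; field_simp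
  have hlo : 0 < lam + om := by linarith
  have hnum : 0 < lam * (1 - xs) - om * xs := by
    have h := (lt_div_iff₀ hlo).mp hlt
    nlinarith
  have hc : 0 < F xs := by
    rw [hF]; exact div_pos hnum (by positivity)
  set c := F xs with hcdef
  have hcne : c ≠ 0 := hc.ne'
  have hpsi' : ∀ s, psi s = beta * (s - xs) := by
    intro s; rw [hpsi, mul_sub]; linarith [hbxs]
  have hV' : ∀ a b : ℝ, 0 < a → 0 < b →
      V a b = (a - xs - xs*(Real.log a - Real.log xs)) +
        (b - c - c*(Real.log b - Real.log c)) := by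
    intro a b ha hb
    rw [hV]
    have h1 : ∀ s : ℝ, psi s / (beta * s) = (s - xs)/s := by
      intro s; rw [hpsi' s]; exact mul_div_mul_left _ _ hbne
    simp only [h1]
    rw [int_eval xs a hxs0 ha, int_eval c b hc hb]
  refine ⟨?_, ?_, ?_⟩
  · intro a b ha hb
    rw [hV' a b ha hb]
    have g1 := (glem xs a hxs0 ha).1
    have g2 := (glem c b hc hb).1
    linarith
  · intro a b ha hb
    rw [hV' a b ha hb]
    obtain ⟨g1, e1⟩ := glem xs a hxs0 ha
    obtain ⟨g2, e2⟩ := glem c b hc hb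
    constructor
    · intro h
      exact ⟨e1.mp (by linarith), e2.mp (by linarith)⟩
    · rintro ⟨rfl, rfl⟩
      simp
  · intro x y hx0 hy0 hx hy t
    have hxne : x t ≠ 0 := (hx0 t).ne'
    have hyne : y t ≠ 0 := (hy0 t).ne'
    have hfun : (fun s => V (x s) (y s)) =
        fun s => (x s - xs - xs*(Real.log (x s) - Real.log xs)) +
                 (y s - c - c*(Real.log (y s) - Real.log c)) :=
      funext fun s => hV' (x s) (y s) (hx0 s) (hy0 s)
    have hFd : F (x t) - c = lam * (xs - x t) / (beta * x t * xs) := by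
      rw [hcdef, hF (x t), hF xs]
      field_simp
      ring
    set X' := beta * x t * (F (x t) - y t) with hX'
    set Y' := y t * psi (x t) with hY'
    have dlogx : HasDerivAt (fun s => Real.log (x s)) ((x t)⁻¹ * X') t :=
      (Real.hasDerivAt_log hxne).comp t (hx t)
    have dlogy : HasDerivAt (fun s => Real.log (y s)) ((y t)⁻¹ * Y') t :=
      (Real.hasDerivAt_log hyne).comp t (hy t)
    have d1 : HasDerivAt (fun s => x s - xs - xs*(Real.log (x s) - Real.log xs))
        (X' - xs * ((x t)⁻¹ * X')) t := by
      have h := ((hx t).sub_const xs).sub ((dlogx.sub_const (Real.log xs)).const_mul xs)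
      exact h
    have d2 : HasDerivAt (fun s => y s - c - c*(Real.log (y s) - Real.log c))
        (Y' - c * ((y t)⁻¹ * Y')) t := by
      have h := ((hy t).sub_const c).sub ((dlogy.sub_const (Real.log c)).const_mul c)
      exact h
    have dsum := d1.add d2
    have hDeq : X' - xs * ((x t)⁻¹ * X') + (Y' - c * ((y t)⁻¹ * Y'))
        = psi (x t) * (F (x t) - c) := by
      rw [hX', hY', hpsi' (x t)]
      field_simp
      ring
    have hmain : HasDerivAt (fun s => V (x s) (y s)) (psi (x t) * (F (x t) - c)) t := by
      rw [hfun, ← hDeq]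
      exact dsum
    refine ⟨hmain, ?_⟩
    have heq : psi (x t) * (F (x t) - c) = -(lam * (x t - xs)^2 / (x t * xs)) := by
      rw [hpsi' (x t), hFd]
      field_simp
      ring
    rw [heq]
    have hxt := hx0 t
    have : 0 ≤ lam * (x t - xs)^2 / (x t * xs) := by positivity
    linarith
end
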